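/- Let G=(V,E) be an st-DAG and let V' ⊆ V be such that the induced subgraph G' of V' is a cluster, with A its set of entry vertices and B its set of exit vertices. Then the set X of all edges of E whose end vertex lies in A is a Fullsyncpoint or a Forward-Halfsyncpoint of G, and the set Y of all edges of E whose start vertex lies in B is a Fullsyncpoint or a Backward-Halfsyncpoint of G. -/

import Mathlib

open Set

variable {V : Type*}

/-- Predecessor set of a vertex. -/
def preds (E : Set (V × V)) (v : V) : Set V := {u | (u, v) ∈ E}

/-- Successor set of a vertex. -/
def succs (E : Set (V × V)) (u : V) : Set V := {w | (u, w) ∈ E}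

/-- A digraph is acyclic: no vertex lies on a nonempty directed cycle. -/
def IsAcyclicDigraph (E : Set (V × V)) : Prop :=
  ∀ v : V, ¬ Relation.TransGen (fun a b => (a, b) ∈ E) v v

/-- `s` is the unique vertex with no incoming edge. -/
def IsSourceOf (E : Set (V × V)) (s : V) : Prop :=
  preds E s = ∅ ∧ ∀ v, preds E v = ∅ → v = s

/-- `t` is the unique vertex with no outgoing edge. -/
def IsTargetOf (E : Set (V × V)) (t : V) : Prop :=
  succs E t = ∅ ∧ ∀ v, succs E v = ∅ → v = t

/-- A set of in-twins: all elements have the identical set of predecessors. -/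
def InTwins (E : Set (V × V)) (S : Set V) : Prop :=
  ∀ v ∈ S, ∀ w ∈ S, preds E v = preds E w

/-- A set of out-twins: all elements have the identical set of successors. -/
def OutTwins (E : Set (V × V)) (P : Set V) : Prop :=
  ∀ u ∈ P, ∀ w ∈ P, succs E u = succs E w

/-- `P_X`: the set of start vertices of the edges of `X`. -/
def startSet (X : Set (V × V)) : Set V := {u | ∃ v, (u, v) ∈ X}

/-- `S_X`: the set of end vertices of the edges of `X`. -/
def endSet (X : Set (V × V)) : Set V := {v | ∃ u, (u, v) ∈ X}

/-- Condition (a) of the syncpoint definition. -/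
def CondA (E X : Set (V × V)) : Prop :=
  (∀ u ∈ startSet X, ∀ v ∈ endSet X, (u, v) ∈ E → (u, v) ∈ X) ∧
  ((endSet X).ncard = 1 ∨ InTwins E (endSet X)) ∧
  (∀ v ∈ endSet X, preds E v = startSet X)

/-- Condition (b) of the syncpoint definition. -/
def CondB (E X : Set (V × V)) : Prop :=
  (∀ u ∈ startSet X, ∀ v ∈ endSet X, (u, v) ∈ E → (u, v) ∈ X) ∧
  ((startSet X).ncard = 1 ∨ OutTwins E (startSet X)) ∧
  (∀ u ∈ startSet X, succs E u = endSet X)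

/-- Fullsyncpoint: a nonempty edge set satisfying both (a) and (b). -/
def IsFSP (E X : Set (V × V)) : Prop :=
  X.Nonempty ∧ X ⊆ E ∧ CondA E X ∧ CondB E X

/-- Forward-Halfsyncpoint: (a) holds and `|S_X| ≥ 2`. -/
def IsFHSP (E X : Set (V × V)) : Prop :=
  X.Nonempty ∧ X ⊆ E ∧ CondA E X ∧ 2 ≤ (endSet X).ncard

/-- Backward-Halfsyncpoint: (b) holds and `|P_X| ≥ 2`. -/
def IsBHSP (E X : Set (V × V)) : Prop :=
  X.Nonempty ∧ X ⊆ E ∧ CondB E X ∧ 2 ≤ (startSet X).ncard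

/-- A syncpoint is an FSP, FHSP or BHSP. -/
def IsSyncpoint (E X : Set (V × V)) : Prop :=
  IsFSP E X ∨ IsFHSP E X ∨ IsBHSP E X

/-- Maximum Syncpoint: a syncpoint that is not a proper subset of another syncpoint. -/
def IsMSP (E X : Set (V × V)) : Prop :=
  IsSyncpoint E X ∧ ∀ Y, IsSyncpoint E Y → ¬ X ⊂ Y

/-- An edge-path: a nonempty list of edges, consecutive edges sharing endpoints. -/
def IsEdgePath (E : Set (V × V)) (p : List (V × V)) : Prop :=
  p ≠ [] ∧ (∀ e ∈ p, e ∈ E) ∧ p.Chain' (fun e f => e.2 = f.1)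

/-- The vertex-path of an edge-path. -/
def vertexPath (p : List (V × V)) : List V :=
  match p with
  | [] => []
  | e :: rest => e.1 :: (e :: rest).map Prod.snd

/-- An st-path: an edge-path starting at `s` and ending at `t`. -/
def IsStPath (E : Set (V × V)) (s t : V) (p : List (V × V)) : Prop :=
  IsEdgePath E p ∧ (∃ e, p.head? = some e ∧ e.1 = s) ∧
    (∃ e, p.getLast? = some e ∧ e.2 = t)

/-- An edge `(u,v) ∈ E` is redundant if there is a directed path from `u` to `v`
not containing the edge `(u,v)`. -/
def IsRedundant (E : Set (V × V)) (e : V × V) : Prop :=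
  e ∈ E ∧ ∃ p, IsEdgePath E p ∧ e ∉ p ∧
    (∃ f, p.head? = some f ∧ f.1 = e.1) ∧ (∃ f, p.getLast? = some f ∧ f.2 = e.2)

/-- A graph is redundant-free if it has no redundant edge. -/
def RedundantFree (E : Set (V × V)) : Prop := ∀ e, ¬ IsRedundant E e

/-- Entry vertices of the subgraph induced by `V'` (in an st-DAG with source `s`). -/
def entrySet (E : Set (V × V)) (s : V) (V' : Set V) : Set V :=
  {v | v ∈ V' ∧ ((∃ u, u ∉ V' ∧ (u, v) ∈ E) ∨ v = s)}

/-- Exit vertices of the subgraph induced by `V'` (in an st-DAG with target `t`). -/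
def exitSet (E : Set (V × V)) (t : V) (V' : Set V) : Set V :=
  {v | v ∈ V' ∧ ((∃ w, w ∉ V' ∧ (v, w) ∈ E) ∨ v = t)}

/-- The induced subgraph of `V'` is a cluster. -/
def IsCluster (E : Set (V × V)) (s t : V) (V' : Set V) : Prop :=
  2 ≤ (entrySet E s V').ncard ∧ 2 ≤ (exitSet E t V').ncard ∧
  entrySet E s V' ∩ exitSet E t V' = ∅ ∧
  InTwins E (entrySet E s V') ∧ OutTwins E (exitSet E t V')


/-- In an st-DAG, the incoming edges of the entry vertex set of a cluster
form a FSP or FHSP, and the outgoing edges of the exit vertex set form a FSP or BHSP. -/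
theorem cluster_borders_are_syncpoints
    {V : Type*} [Fintype V] [Nonempty V] (E : Set (V × V)) (s t : V)
    (hacyc : IsAcyclicDigraph E) (hs : IsSourceOf E s) (ht : IsTargetOf E t)
    (V' : Set V) (hclust : IsCluster E s t V') :
    (IsFSP E {e | e ∈ E ∧ e.2 ∈ entrySet E s V'} ∨
      IsFHSP E {e | e ∈ E ∧ e.2 ∈ entrySet E s V'}) ∧
    (IsFSP E {e | e ∈ E ∧ e.1 ∈ exitSet E t V'} ∨
      IsBHSP E {e | e ∈ E ∧ e.1 ∈ exitSet E t V'}) := by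
  obtain ⟨hA2, hB2, hAB, hAtw, hBtw⟩ := hclust
  set A := entrySet E s V' with hAdef
  set B := exitSet E t V' with hBdef
  set X : Set (V × V) := {e | e ∈ E ∧ e.2 ∈ A} with hXdef
  set Y : Set (V × V) := {e | e ∈ E ∧ e.1 ∈ B} with hYdef
  -- every vertex of A has a predecessor
  have hApred : ∀ v ∈ A, (preds E v).Nonempty := by
    intro v hv
    by_contra h
    rw [Set.not_nonempty_iff_eq_empty] at h
    have hsub : A ⊆ {s} := by
      intro w hw
      have : preds E w = ∅ := by rw [hAtw w hw v hv, h]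
      exact hs.2 w this
    have := Set.ncard_le_ncard hsub (Set.finite_singleton s)
    rw [Set.ncard_singleton] at this
    omega
  -- every vertex of B has a successor
  have hBsucc : ∀ v ∈ B, (succs E v).Nonempty := by
    intro v hv
    by_contra h
    rw [Set.not_nonempty_iff_eq_empty] at h
    have hsub : B ⊆ {t} := by
      intro w hw
      have : succs E w = ∅ := by rw [hBtw w hw v hv, h]
      exact ht.2 w this
    have := Set.ncard_le_ncard hsub (Set.finite_singleton t)
    rw [Set.ncard_singleton] at this
    omega
  have hend : endSet X = A := by
    ext v
    constructor
    · rintro ⟨u, hu, hv⟩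
      exact hv
    · intro hv
      obtain ⟨u, hu⟩ := hApred v hv
      exact ⟨u, hu, hv⟩
  have hstartY : startSet Y = B := by
    ext v
    constructor
    · rintro ⟨w, hw, hv⟩
      exact hv
    · intro hv
      obtain ⟨w, hw⟩ := hBsucc v hv
      exact ⟨w, hw, hv⟩
  have hpredsX : ∀ v ∈ endSet X, preds E v = startSet X := by
    intro v hv
    rw [hend] at hv
    ext u
    constructor
    · intro hu
      exact ⟨v, hu, hv⟩
    · rintro ⟨w, hw, hwA⟩
      have : preds E w = preds E v := hAtw w hwA v hv
      rw [← this]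
      exact hw
  have hsuccsY : ∀ u ∈ startSet Y, succs E u = endSet Y := by
    intro u hu
    rw [hstartY] at hu
    ext w
    constructor
    · intro hw
      exact ⟨u, hw, hu⟩
    · rintro ⟨v, hv, hvB⟩
      have : succs E v = succs E u := hBtw v hvB u hu
      rw [← this]
      exact hv
  have hAne : A.Nonempty := by
    rcases Set.eq_empty_or_nonempty A with h | h
    · rw [h] at hA2; simp at hA2
    · exact h
  have hBne : B.Nonempty := by
    rcases Set.eq_empty_or_nonempty B with h | h
    · rw [h] at hB2; simp at hB2
    · exact h
  constructor
  · right
    obtain ⟨v, hv⟩ := hAne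
    obtain ⟨u, hu⟩ := hApred v hv
    refine ⟨⟨(u, v), hu, hv⟩, fun e he => he.1, ⟨?_, Or.inr ?_, hpredsX⟩, ?_⟩
    · intro u' _ v' hv' huv'
      exact ⟨huv', (hend ▸ hv' : v' ∈ A)⟩
    · rw [hend]; exact hAtw
    · rw [hend]; exact hA2
  · right
    obtain ⟨v, hv⟩ := hBne
    obtain ⟨w, hw⟩ := hBsucc v hv
    refine ⟨⟨(v, w), hw, hv⟩, fun e he => he.1, ⟨?_, Or.inr ?_, hsuccsY⟩, ?_⟩
    · intro u' hu' v' _ huv'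
      exact ⟨huv', (hstartY ▸ hu' : u' ∈ B)⟩
    · rw [hstartY]; exact hBtw
    · rw [hstartY]; exact hB2
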